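/- Let m > 0 and let (S_n, 𝓕_n) be a martingale with sup_n sup_{p ≥ 2} |S_n|_p/p^{1/m} < ∞. Then S_n converges almost surely to a random variable S, and for every Δ ∈ (0, m): lim_{n → ∞} sup_{p ≥ 2} |S_n − S|_p/p^{1/(m−Δ)} = 0. -/

import Mathlib

open MeasureTheory Filter Set
open scoped ENNReal Topology NNReal

/-- Uniform integrability from a uniform bound at a doubled exponent. -/
lemma aux_ui {Ω : Type*} [MeasurableSpace Ω] {μ : Measure Ω}
    (f : ℕ → Ω → ℝ) (hf : ∀ n, AEStronglyMeasurable (f n) μ)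
    (q : ℝ≥0∞) (hq : 1 ≤ q) (hq' : q ≠ ⊤) (M : ℝ≥0∞) (hM : M ≠ ⊤)
    (hbd : ∀ n, eLpNorm (f n) (q * ENNReal.ofReal 2) μ ≤ M) :
    UnifIntegrable f q μ := by
  refine unifIntegrable_of hq hq' hf (fun ε hε => ?_)
  have hM2 : M ^ (2:ℝ) ≠ ⊤ := ENNReal.rpow_ne_top_of_nonneg (by norm_num) hM
  have hεne : ENNReal.ofReal ε ≠ 0 := (ENNReal.ofReal_pos.2 hε).ne'
  have hdiv_ne : M ^ (2:ℝ) / ENNReal.ofReal ε ≠ ⊤ :=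
    (ENNReal.div_lt_top hM2 hεne).ne
  set C : ℝ≥0 := (M ^ (2:ℝ) / ENNReal.ofReal ε).toNNReal + 1 with hCdef
  have hC1 : (1:ℝ≥0) ≤ C := le_add_self
  have hCpos : (0:ℝ) < (C:ℝ) := by exact_mod_cast lt_of_lt_of_le one_pos hC1
  have hClt : M ^ (2:ℝ) / ENNReal.ofReal ε < (C : ℝ≥0∞) := by
    rw [hCdef, ENNReal.coe_add, ENNReal.coe_toNNReal hdiv_ne, ENNReal.coe_one]
    exact ENNReal.lt_add_right hdiv_ne one_ne_zero
  refine ⟨C, fun n => ?_⟩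
  have hpt : ∀ x, ‖({ x | C ≤ ‖f n x‖₊ }.indicator (f n)) x‖ ≤
      ‖((C:ℝ)⁻¹ • fun x => ‖f n x‖ ^ (2:ℝ)) x‖ := by
    intro x
    by_cases hx : x ∈ { x | C ≤ ‖f n x‖₊ }
    · rw [Set.indicator_of_mem hx]
      have hx' : (C:ℝ) ≤ ‖f n x‖ := hx
      have hfx : (0:ℝ) ≤ ‖f n x‖ := norm_nonneg _
      have hr2 : ‖f n x‖ ^ (2:ℝ) = ‖f n x‖ * ‖f n x‖ := by
        rw [Real.rpow_two, sq]
      simp only [Pi.smul_apply, smul_eq_mul, hr2]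
      rw [Real.norm_eq_abs ((C:ℝ)⁻¹ * (‖f n x‖ * ‖f n x‖)),
        abs_of_nonneg (by positivity), inv_mul_eq_div, le_div_iff₀ hCpos]
      nlinarith
    · rw [Set.indicator_of_notMem hx]
      simp only [norm_zero]
      exact norm_nonneg _
  calc eLpNorm ({ x | C ≤ ‖f n x‖₊ }.indicator (f n)) q μ
      ≤ eLpNorm ((C:ℝ)⁻¹ • fun x => ‖f n x‖ ^ (2:ℝ)) q μ := eLpNorm_mono hpt
    _ = (‖(C:ℝ)⁻¹‖₊ : ℝ≥0∞) * eLpNorm (fun x => ‖f n x‖ ^ (2:ℝ)) q μ :=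
        eLpNorm_const_smul _ _ _ _
    _ = (C : ℝ≥0∞)⁻¹ * eLpNorm (f n) (q * ENNReal.ofReal 2) μ ^ (2:ℝ) := by
        rw [eLpNorm_norm_rpow _ (by norm_num : (0:ℝ) < 2)]
        congr 1
        rw [nnnorm_inv, NNReal.nnnorm_eq,
          ENNReal.coe_inv (zero_lt_one.trans_le hC1).ne']
    _ ≤ (C : ℝ≥0∞)⁻¹ * M ^ (2:ℝ) :=
        mul_le_mul_right (ENNReal.rpow_le_rpow (hbd n) (by norm_num)) _
    _ ≤ ENNReal.ofReal ε := by
        have hC0 : (C:ℝ≥0∞) ≠ 0 := by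
          exact_mod_cast (zero_lt_one.trans_le hC1).ne'
        have h1 : M ^ (2:ℝ) ≤ (C:ℝ≥0∞) * ENNReal.ofReal ε := by
          have h := hClt.le
          rwa [ENNReal.div_le_iff_le_mul (Or.inl hεne)
            (Or.inl ENNReal.ofReal_ne_top)] at h
        rw [← ENNReal.div_eq_inv_mul,
          ENNReal.div_le_iff_le_mul (Or.inl hC0) (Or.inl ENNReal.coe_ne_top)]
        calc M ^ (2:ℝ) ≤ (C:ℝ≥0∞) * ENNReal.ofReal ε := h1
          _ = ENNReal.ofReal ε * (C:ℝ≥0∞) := mul_comm _ _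

theorem stmt17 {Ω : Type*} [m0 : MeasurableSpace Ω] (μ : Measure Ω) [IsProbabilityMeasure μ]
    (ℱ : Filtration ℕ m0) (S : ℕ → Ω → ℝ) (hmart : Martingale S ℱ μ)
    (m : ℝ) (hm : 0 < m)
    (hbdd : (⨆ n : ℕ, ⨆ p : {p : ℝ // 2 ≤ p},
      eLpNorm (S n) (ENNReal.ofReal (p : ℝ)) μ / ENNReal.ofReal ((p : ℝ) ^ (1/m))) < ⊤) :
    ∃ Slim : Ω → ℝ,
      (∀ᵐ ω ∂μ, Filter.Tendsto (fun n => S n ω) Filter.atTop (𝓝 (Slim ω))) ∧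
      ∀ Δ : ℝ, Δ ∈ Set.Ioo 0 m →
        Filter.Tendsto
          (fun n : ℕ => ⨆ p : {p : ℝ // 2 ≤ p},
            eLpNorm (fun ω => S n ω - Slim ω) (ENNReal.ofReal (p : ℝ)) μ /
              ENNReal.ofReal ((p : ℝ) ^ (1/(m - Δ))))
          Filter.atTop (𝓝 0) := by
  set C₀ : ℝ≥0∞ := ⨆ n : ℕ, ⨆ p : {p : ℝ // 2 ≤ p},
      eLpNorm (S n) (ENNReal.ofReal (p : ℝ)) μ / ENNReal.ofReal ((p : ℝ) ^ (1/m)) with hC₀def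
  have hC₀ : C₀ ≠ ⊤ := hbdd.ne
  have hSmeas : ∀ n, AEStronglyMeasurable (S n) μ :=
    fun n => ((hmart.stronglyAdapted n).mono (ℱ.le n)).aestronglyMeasurable
  -- basic bound
  have hbd : ∀ (n : ℕ) (p : ℝ), 2 ≤ p →
      eLpNorm (S n) (ENNReal.ofReal p) μ ≤ C₀ * ENNReal.ofReal (p ^ (1/m)) := by
    intro n p hp
    have hppos : (0:ℝ) < p := by linarith
    have hd0 : ENNReal.ofReal (p ^ (1/m)) ≠ 0 := by
      simp [ENNReal.ofReal_eq_zero, not_le, Real.rpow_pos_of_pos hppos]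
    have hle : eLpNorm (S n) (ENNReal.ofReal p) μ / ENNReal.ofReal (p ^ (1/m)) ≤ C₀ := by
      rw [hC₀def]
      exact le_iSup_of_le n (le_iSup_of_le (⟨p, hp⟩ : {q : ℝ // 2 ≤ q}) le_rfl)
    rw [ENNReal.div_le_iff_le_mul (Or.inl hd0) (Or.inl ENNReal.ofReal_ne_top)] at hle
    exact hle
  -- a.s. convergence
  set Slim : Ω → ℝ := ℱ.limitProcess S μ with hSlimdef
  have hR : ∀ n, eLpNorm (S n) 1 μ ≤ (C₀ * ENNReal.ofReal ((2:ℝ) ^ (1/m))).toNNReal := by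
    intro n
    have h1 : eLpNorm (S n) 1 μ ≤ eLpNorm (S n) (ENNReal.ofReal 2) μ :=
      eLpNorm_le_eLpNorm_of_exponent_le (by simp [ENNReal.one_le_ofReal]) (hSmeas n)
    refine h1.trans ((hbd n 2 le_rfl).trans ?_)
    rw [ENNReal.coe_toNNReal (ENNReal.mul_lt_top hC₀.lt_top ENNReal.ofReal_lt_top).ne]
  have h_ae : ∀ᵐ ω ∂μ, Tendsto (fun n => S n ω) atTop (𝓝 (Slim ω)) :=
    hmart.submartingale.ae_tendsto_limitProcess hR
  have hSlim_meas : AEStronglyMeasurable Slim μ :=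
    Filtration.stronglyMeasurable_limit_process'.aestronglyMeasurable
  -- Fatou bound for Slim
  have hSlimbd : ∀ p : ℝ, 2 ≤ p →
      eLpNorm Slim (ENNReal.ofReal p) μ ≤ C₀ * ENNReal.ofReal (p ^ (1/m)) := by
    intro p hp
    refine (Lp.eLpNorm_lim_le_liminf_eLpNorm hSmeas Slim h_ae).trans ?_
    exact liminf_le_of_frequently_le' (Frequently.of_forall fun n => hbd n p hp)
  -- bound on differences
  have hsub_bd : ∀ (n : ℕ) (p : ℝ), 2 ≤ p →
      eLpNorm (S n - Slim) (ENNReal.ofReal p) μ ≤ (C₀ + C₀) * ENNReal.ofReal (p ^ (1/m)) := by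
    intro n p hp
    have h1 : (1:ℝ≥0∞) ≤ ENNReal.ofReal p := by
      rw [ENNReal.one_le_ofReal]; linarith
    refine (eLpNorm_sub_le (hSmeas n) hSlim_meas h1).trans ?_
    rw [add_mul]
    exact add_le_add (hbd n p hp) (hSlimbd p hp)
  -- fixed exponent Lp convergence
  have key : ∀ P : ℝ, 2 ≤ P →
      Tendsto (fun n => eLpNorm (S n - Slim) (ENNReal.ofReal P) μ) atTop (𝓝 0) := by
    intro P hP
    have h1 : (1:ℝ≥0∞) ≤ ENNReal.ofReal P := by
      rw [ENNReal.one_le_ofReal]; linarith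
    have hui : UnifIntegrable S (ENNReal.ofReal P) μ := by
      refine aux_ui S hSmeas _ h1 ENNReal.ofReal_ne_top
        (C₀ * ENNReal.ofReal ((P * 2) ^ (1/m)))
        (ENNReal.mul_lt_top hC₀.lt_top ENNReal.ofReal_lt_top).ne (fun n => ?_)
      rw [← ENNReal.ofReal_mul (by linarith)]
      exact hbd n (P * 2) (by linarith)
    have hgmem : MemLp Slim (ENNReal.ofReal P) μ :=
      ⟨hSlim_meas, (hSlimbd P hP).trans_lt
        (ENNReal.mul_lt_top hC₀.lt_top ENNReal.ofReal_lt_top)⟩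
    exact tendsto_Lp_finite_of_tendsto_ae h1 ENNReal.ofReal_ne_top hSmeas hgmem hui h_ae
  refine ⟨Slim, h_ae, ?_⟩
  intro Δ hΔ
  obtain ⟨hΔ0, hΔm⟩ := hΔ
  set α : ℝ := 1 / (m - Δ) with hαdef
  have hmΔ : 0 < m - Δ := sub_pos.2 hΔm
  have hα : 0 < α := by positivity
  have hαm : 1 / m < α := one_div_lt_one_div_of_lt hmΔ (by linarith)
  have hneg : 1 / m - α < 0 := by linarith
  rw [ENNReal.tendsto_atTop_zero]
  intro ε hε
  -- choose tail threshold P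
  have htail : Tendsto (fun P : ℝ => (C₀ + C₀) * ENNReal.ofReal (P ^ (1/m - α)))
      atTop (𝓝 0) := by
    have h1 : Tendsto (fun P : ℝ => P ^ (1/m - α)) atTop (𝓝 0) := by
      have := tendsto_rpow_neg_atTop (show (0:ℝ) < α - 1/m by linarith)
      simpa [neg_sub] using this
    have h2 : Tendsto (fun P : ℝ => ENNReal.ofReal (P ^ (1/m - α))) atTop (𝓝 0) := by
      have := (ENNReal.continuous_ofReal.tendsto 0).comp h1
      simpa [Function.comp_def] using this
    have h3 := ENNReal.Tendsto.const_mul h2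
      (Or.inr (by simp [ENNReal.add_ne_top, hC₀] : (C₀ + C₀) ≠ ⊤))
    simpa using h3
  have hPfreq : ∀ᶠ P : ℝ in atTop,
      (C₀ + C₀) * ENNReal.ofReal (P ^ (1/m - α)) < ε := htail.eventually_lt_const hε
  obtain ⟨P, hP2, hPlt⟩ :
      ∃ P : ℝ, 2 ≤ P ∧ (C₀ + C₀) * ENNReal.ofReal (P ^ (1/m - α)) < ε := by
    obtain ⟨P, hP⟩ := (hPfreq.and (eventually_ge_atTop (2:ℝ))).exists
    exact ⟨P, hP.2, hP.1⟩
  obtain ⟨N, hN⟩ := ENNReal.tendsto_atTop_zero.mp (key P hP2) ε hε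
  refine ⟨N, fun n hn => ?_⟩
  refine iSup_le ?_
  rintro ⟨p, hp⟩
  have hfun : (fun ω => S n ω - Slim ω) = S n - Slim := rfl
  rw [hfun]
  have hppos : (0:ℝ) < p := by linarith
  by_cases hpP : p ≤ P
  · -- small p: use Lp convergence at exponent P
    have hmono : eLpNorm (S n - Slim) (ENNReal.ofReal p) μ ≤
        eLpNorm (S n - Slim) (ENNReal.ofReal P) μ :=
      eLpNorm_le_eLpNorm_of_exponent_le (ENNReal.ofReal_le_ofReal hpP)
        ((hSmeas n).sub hSlim_meas)
    have hd1 : (1:ℝ≥0∞) ≤ ENNReal.ofReal (p ^ α) := by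
      rw [ENNReal.one_le_ofReal]
      exact Real.one_le_rpow (by linarith) hα.le
    calc eLpNorm (S n - Slim) (ENNReal.ofReal p) μ / ENNReal.ofReal (p ^ (1/(m-Δ)))
        ≤ eLpNorm (S n - Slim) (ENNReal.ofReal p) μ := by
          rw [div_eq_mul_inv]
          calc _ ≤ eLpNorm (S n - Slim) (ENNReal.ofReal p) μ * 1 :=
                mul_le_mul_right (ENNReal.inv_le_one.2 hd1) _
            _ = _ := mul_one _
      _ ≤ eLpNorm (S n - Slim) (ENNReal.ofReal P) μ := hmono
      _ ≤ ε := hN n hn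
  · -- large p: use the tail bound
    push_neg at hpP
    calc eLpNorm (S n - Slim) (ENNReal.ofReal p) μ / ENNReal.ofReal (p ^ (1/(m-Δ)))
        ≤ ((C₀ + C₀) * ENNReal.ofReal (p ^ (1/m))) / ENNReal.ofReal (p ^ α) :=
          ENNReal.div_le_div_right (hsub_bd n p hp) _
      _ = (C₀ + C₀) * ENNReal.ofReal (p ^ (1/m - α)) := by
          rw [mul_div_assoc, ← ENNReal.ofReal_div_of_pos (Real.rpow_pos_of_pos hppos α),
            ← Real.rpow_sub hppos]
      _ ≤ (C₀ + C₀) * ENNReal.ofReal (P ^ (1/m - α)) := by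
          exact mul_le_mul_right (ENNReal.ofReal_le_ofReal
            (Real.rpow_le_rpow_of_nonpos (by linarith) hpP.le hneg.le)) _
      _ ≤ ε := hPlt.le
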